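/- Let G = H·Ĝ with H of full column rank and Ĝ of full row rank, and let σ satisfy 0 < σ < 2/λ_max(Gᵀ·G). Then with F = σ·Gᵀ, all eigenvalues of Ĝ·F·H are real and positive, ρ(I_m − Ĝ·F·H) < 1, and ‖I_q − σ·Gᵀ·G‖₂ ≤ 1, so the iteration U_{k+1} = (I_q − F·G)·U_k + F·Y_d satisfies ‖U_{k+1} − U_∞‖₂ ≤ ‖U_k − U_∞‖₂ for every fixed point U_∞ of the iteration. -/

import Mathlib

open Matrix

/-- Spectral radius of a real square matrix via its complexification. -/
noncomputable def specRad {n : ℕ} (A : Matrix (Fin n) (Fin n) ℝ) : ENNReal :=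
  spectralRadius ℂ (A.map (algebraMap ℝ ℂ))


private lemma isUnit_of_rank_eq {k : ℕ} (A : Matrix (Fin k) (Fin k) ℝ) (h : A.rank = k) :
    IsUnit A := by
  rw [← Matrix.mulVec_surjective_iff_isUnit]
  have h1 : LinearMap.range A.mulVecLin = ⊤ := by
    apply Submodule.eq_top_of_finrank_eq
    rw [Matrix.rank] at h
    rw [h, Module.finrank_fin_fun]
  have := LinearMap.range_eq_top.mp h1
  exact this

private lemma isUnit_map_c {k : ℕ} {A : Matrix (Fin k) (Fin k) ℝ} (h : IsUnit A) :
    IsUnit (A.map (algebraMap ℝ ℂ)) := by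
  rw [Matrix.isUnit_iff_isUnit_det] at h ⊢
  have hd : (A.map (algebraMap ℝ ℂ)).det = ((A.det : ℝ) : ℂ) :=
    ((algebraMap ℝ ℂ).map_det A).symm
  rw [hd, isUnit_iff_ne_zero] at *
  exact_mod_cast h

private lemma conjT_map {k l : ℕ} (A : Matrix (Fin k) (Fin l) ℝ) :
    (A.map (algebraMap ℝ ℂ))ᴴ = Aᵀ.map (algebraMap ℝ ℂ) := by
  ext i j
  simp [Matrix.conjTranspose_apply, Matrix.map_apply, Complex.conj_ofReal]

private lemma star_dot {k : ℕ} (u : Fin k → ℂ) :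
    star u ⬝ᵥ u = ((∑ i, Complex.normSq (u i) : ℝ) : ℂ) := by
  push_cast
  refine Finset.sum_congr rfl fun i _ => ?_
  simp [Pi.star_apply, Complex.normSq_eq_conj_mul_self]

private lemma dot_self_form {k l : ℕ} (A : Matrix (Fin k) (Fin l) ℝ) (w : Fin k → ℂ) :
    star w ⬝ᵥ ((A * Aᵀ).map (algebraMap ℝ ℂ)) *ᵥ w
      = ((∑ i, Complex.normSq ((Aᵀ.map (algebraMap ℝ ℂ) *ᵥ w) i) : ℝ) : ℂ) := by
  have hBH : (A.map (algebraMap ℝ ℂ))ᴴ = Aᵀ.map (algebraMap ℝ ℂ) := conjT_map A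
  have hmap : (A * Aᵀ).map (algebraMap ℝ ℂ)
      = A.map (algebraMap ℝ ℂ) * (A.map (algebraMap ℝ ℂ))ᴴ := by
    rw [hBH, Matrix.map_mul]
  rw [hmap, ← Matrix.mulVec_mulVec, Matrix.dotProduct_mulVec, ← hBH]
  have hst : star w ᵥ* A.map (algebraMap ℝ ℂ)
      = star ((A.map (algebraMap ℝ ℂ))ᴴ *ᵥ w) := by
    rw [Matrix.star_mulVec, Matrix.conjTranspose_conjTranspose]
  rw [hst, star_dot]

local notation "⟪" x ", " y "⟫" => @inner ℝ _ _ x y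

private lemma inner_eq_dot {q : ℕ} (u v : EuclideanSpace ℝ (Fin q)) :
    ⟪u, v⟫ = (u : Fin q → ℝ) ⬝ᵥ (v : Fin q → ℝ) := by
  simp [PiLp.inner_apply, RCLike.inner_apply, dotProduct, mul_comm]

private lemma eig_mem {q : ℕ} {A : Matrix (Fin q) (Fin q) ℝ} (hA : A.IsHermitian)
    {μ : ℝ} {x : Fin q → ℝ} (hx : x ≠ 0) (hax : A *ᵥ x = μ • x) :
    ∃ j, μ = hA.eigenvalues j := by
  by_contra hc
  push_neg at hc
  set b := hA.eigenvectorBasis with hb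
  have hsym : Aᵀ = A := by
    rw [← Matrix.conjTranspose_eq_transpose_of_trivial]; exact hA
  have key : ∀ j, (⇑(b j) : Fin q → ℝ) ⬝ᵥ x = 0 := by
    intro j
    have h1 : (⇑(b j) : Fin q → ℝ) ⬝ᵥ (A *ᵥ x)
        = hA.eigenvalues j * ((⇑(b j) : Fin q → ℝ) ⬝ᵥ x) := by
      rw [Matrix.dotProduct_mulVec]
      have hvm : (⇑(b j) : Fin q → ℝ) ᵥ* A = A *ᵥ (⇑(b j) : Fin q → ℝ) := by
        conv_lhs => rw [← hsym]
        rw [Matrix.vecMul_transpose]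
      rw [hvm, hA.mulVec_eigenvectorBasis, smul_dotProduct]
      simp [hb]
    have h2 : (⇑(b j) : Fin q → ℝ) ⬝ᵥ (A *ᵥ x)
        = μ * ((⇑(b j) : Fin q → ℝ) ⬝ᵥ x) := by
      rw [hax, dotProduct_smul]; simp
    have := h1.symm.trans h2
    have hne : μ ≠ hA.eigenvalues j := hc j
    rcases mul_eq_mul_right_iff.mp this.symm with h | h
    · exact absurd h hne
    · exact h
  apply hx
  have hX : (WithLp.equiv 2 (Fin q → ℝ)).symm x = 0 := by
    have hrepr := b.sum_repr ((WithLp.equiv 2 (Fin q → ℝ)).symm x)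
    rw [← hrepr]
    refine Finset.sum_eq_zero fun j _ => ?_
    rw [b.repr_apply_apply, inner_eq_dot]
    have hk : b j ⬝ᵥ (WithLp.equiv 2 (Fin q → ℝ)).symm x = 0 := key j
    rw [hk, zero_smul]
  simpa using congrArg WithLp.ofLp hX

/-- Euclidean norm of a vector in `ℝ^n`. -/
noncomputable def enorm' {n : ℕ} (v : Fin n → ℝ) : ℝ := Real.sqrt (∑ i, v i ^ 2)

local notation "⟪" x ", " y "⟫" => @inner ℝ _ _ x y

private lemma enorm'_aux {n : ℕ} (v : Fin n → ℝ) :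
    enorm' v = ‖(WithLp.equiv 2 (Fin n → ℝ)).symm v‖ := by
  rw [EuclideanSpace.norm_eq, enorm']
  congr 1
  refine Finset.sum_congr rfl fun i _ => ?_
  rw [WithLp.equiv_symm_apply, WithLp.ofLp_toLp, Real.norm_eq_abs, sq_abs]

private lemma norm_sum_smul {q : ℕ} (b : OrthonormalBasis (Fin q) ℝ (EuclideanSpace ℝ (Fin q)))
    (d : Fin q → ℝ) : ‖∑ j, d j • b j‖ ^ 2 = ∑ j, d j ^ 2 := by
  rw [← real_inner_self_eq_norm_sq]
  rw [b.orthonormal.inner_sum d d Finset.univ]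
  refine Finset.sum_congr rfl fun j _ => ?_
  simp [sq]

private lemma norm_mulVec_le {q : ℕ} {A : Matrix (Fin q) (Fin q) ℝ} (hA : A.IsHermitian)
    {σ : ℝ} (hbd : ∀ j, |1 - σ * hA.eigenvalues j| ≤ 1) (v : Fin q → ℝ) :
    enorm' ((1 - σ • A) *ᵥ v) ≤ enorm' v := by
  classical
  set b := hA.eigenvectorBasis with hb
  set V : EuclideanSpace ℝ (Fin q) := (WithLp.equiv 2 (Fin q → ℝ)).symm v with hV
  set c : Fin q → ℝ := fun j => b.repr V j with hc
  have hrepr : ∑ j, c j • b j = V := b.sum_repr V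
  -- pi-level decomposition of v
  have hv' : v = ∑ j, c j • (b j : Fin q → ℝ) := by
    have : (∑ j, c j • b j : EuclideanSpace ℝ (Fin q)) = V := hrepr
    have h' := congrArg WithLp.ofLp this
    rw [WithLp.ofLp_sum] at h'
    exact h'.symm
  have hmul : (1 - σ • A) *ᵥ v = ∑ j, ((1 - σ * hA.eigenvalues j) * c j) • (b j : Fin q → ℝ) := by
    conv_lhs => rw [hv']
    rw [← Matrix.mulVecLin_apply, map_sum]
    refine Finset.sum_congr rfl fun j _ => ?_
    rw [_root_.map_smul, Matrix.mulVecLin_apply, Matrix.sub_mulVec, Matrix.one_mulVec,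
      Matrix.smul_mulVec]
    ext i
    have hthis : (A *ᵥ b j) i = hA.eigenvalues j * (b j) i :=
      congrFun (hA.mulVec_eigenvectorBasis j) i
    simp only [Pi.smul_apply, Pi.sub_apply, PiLp.smul_apply, smul_eq_mul]
    rw [hthis]
    ring
  have h1 : enorm' ((1 - σ • A) *ᵥ v) ^ 2 = ∑ j, ((1 - σ * hA.eigenvalues j) * c j) ^ 2 := by
    rw [enorm'_aux,
      show (WithLp.equiv 2 (Fin q → ℝ)).symm ((1 - σ • A) *ᵥ v)
        = ∑ j, ((1 - σ * hA.eigenvalues j) * c j) • b j from by rw [hmul, WithLp.equiv_symm_apply, WithLp.toLp_sum]; rfl,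
      norm_sum_smul]
  have h2 : enorm' v ^ 2 = ∑ j, c j ^ 2 := by
    rw [enorm'_aux,
      show (WithLp.equiv 2 (Fin q → ℝ)).symm v = ∑ j, c j • b j from hrepr.symm,
      norm_sum_smul]
  have hle : enorm' ((1 - σ • A) *ᵥ v) ^ 2 ≤ enorm' v ^ 2 := by
    rw [h1, h2]
    refine Finset.sum_le_sum fun j _ => ?_
    have h := hbd j
    have h1' : (1 - σ * hA.eigenvalues j) ^ 2 ≤ 1 := by rw [← sq_abs]; exact pow_le_one₀ (abs_nonneg _) h
    calc ((1 - σ * hA.eigenvalues j) * c j) ^ 2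
        = (1 - σ * hA.eigenvalues j) ^ 2 * c j ^ 2 := by ring
      _ ≤ 1 * c j ^ 2 := mul_le_mul_of_nonneg_right h1' (sq_nonneg _)
      _ = c j ^ 2 := one_mul _
  have h0 : 0 ≤ enorm' v := Real.sqrt_nonneg _
  nlinarith [Real.sqrt_nonneg (∑ i, ((1 - σ • A) *ᵥ v) i ^ 2), hle]


set_option maxHeartbeats 1600000 in
/-- For a rank factorization `G = H·Ĝ` and `0 < σ < 2/λ_max(Gᵀ·G)`, with
`F = σ·Gᵀ`: all eigenvalues of `Ĝ·F·H` are real and positive,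
`ρ(I_m − Ĝ·F·H) < 1`, the spectral norm of `I_q − σ·Gᵀ·G` is at most `1`, and
the iteration `U_{k+1} = (I_q − F·G)·U_k + F·Y_d` is monotonically
nonexpansive towards any of its fixed points. -/
theorem stmt17 {p q m : ℕ} (G : Matrix (Fin p) (Fin q) ℝ)
    (H : Matrix (Fin p) (Fin m) ℝ) (Gh : Matrix (Fin m) (Fin q) ℝ)
    (hfac : G = H * Gh) (hH : H.rank = m) (hGh : Gh.rank = m)
    (σ : ℝ) (hHerm : (Gᵀ * G).IsHermitian)
    (hσ0 : 0 < σ) (hσ2 : σ < 2 / (⨆ i, hHerm.eigenvalues i))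
    (F : Matrix (Fin q) (Fin p) ℝ) (hF : F = σ • Gᵀ) (Yd : Fin p → ℝ)
    (U : ℕ → Fin q → ℝ)
    (hU : ∀ k, U (k + 1) = (1 - F * G).mulVec (U k) + F.mulVec Yd) :
    (∀ z ∈ spectrum ℂ ((Gh * F * H).map (algebraMap ℝ ℂ)), z.im = 0 ∧ 0 < z.re) ∧
    specRad (1 - Gh * F * H) < 1 ∧
    (∀ v : Fin q → ℝ, enorm' ((1 - σ • (Gᵀ * G)).mulVec v) ≤ enorm' v) ∧
    (∀ Uinf : Fin q → ℝ, Uinf = (1 - F * G).mulVec Uinf + F.mulVec Yd →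
      ∀ k, enorm' (U (k + 1) - Uinf) ≤ enorm' (U k - Uinf)) := by
  classical
  set lam := ⨆ i, hHerm.eigenvalues i with hlamdef
  have hpsd : (Gᵀ * G).PosSemidef := by
    have h := Matrix.posSemidef_conjTranspose_mul_self G
    rwa [Matrix.conjTranspose_eq_transpose_of_trivial] at h
  have hμ0 : ∀ j, 0 ≤ hHerm.eigenvalues j := fun j => hpsd.eigenvalues_nonneg j
  have hμle : ∀ j, hHerm.eigenvalues j ≤ lam := fun j =>
    le_ciSup (Finite.bddAbove_range _) j
  have hlam0 : 0 < lam := by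
    by_contra hle
    push_neg at hle
    have h2 : 2 / lam ≤ 0 := div_nonpos_of_nonneg_of_nonpos (by norm_num) hle
    linarith
  have hσlam : σ * lam < 2 := (lt_div_iff₀ hlam0).mp hσ2
  have hbd : ∀ j, |1 - σ * hHerm.eigenvalues j| ≤ 1 := by
    intro j
    have h1 := hμ0 j
    have h2 := hμle j
    rw [abs_le]
    constructor
    · nlinarith
    · nlinarith
  have part3 : ∀ v : Fin q → ℝ, enorm' ((1 - σ • (Gᵀ * G)).mulVec v) ≤ enorm' v :=
    fun v => norm_mulVec_le hHerm hbd v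
  have habs : ∀ j, 0 < hHerm.eigenvalues j → ‖1 - σ * hHerm.eigenvalues j‖₊ < 1 := by
    intro j hμj
    have h1 : |1 - σ * hHerm.eigenvalues j| < 1 := by
      rw [abs_lt]
      constructor
      · nlinarith [hμle j]
      · nlinarith [mul_pos hσ0 hμj]
    rw [← NNReal.coe_lt_coe]
    simpa [coe_nnnorm, Real.norm_eq_abs] using h1
  -- the matrix `Gh*F*H` is invertible
  have hfacM : Gh * F * H = σ • (Gh * Ghᵀ * (Hᵀ * H)) := by
    rw [hF, hfac, Matrix.transpose_mul]
    simp only [Matrix.mul_smul, Matrix.smul_mul, Matrix.mul_assoc]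
  have hPu : IsUnit (Gh * Ghᵀ) :=
    isUnit_of_rank_eq _ (by rw [Matrix.rank_self_mul_transpose, hGh])
  have hQu : IsUnit (Hᵀ * H) :=
    isUnit_of_rank_eq _ (by rw [Matrix.rank_transpose_mul_self, hH])
  have hMu : IsUnit (Gh * F * H) := by
    rw [hfacM, Matrix.isUnit_iff_isUnit_det, Matrix.det_smul, Matrix.det_mul]
    rw [Matrix.isUnit_iff_isUnit_det, isUnit_iff_ne_zero] at hPu hQu
    rw [isUnit_iff_ne_zero]
    exact mul_ne_zero (pow_ne_zero _ (ne_of_gt hσ0)) (mul_ne_zero hPu hQu)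
  have hMCu : IsUnit ((Gh * F * H).map (algebraMap ℝ ℂ)) := isUnit_map_c hMu
  -- key spectral characterization
  have key : ∀ z ∈ spectrum ℂ ((Gh * F * H).map (algebraMap ℝ ℂ)),
      ∃ j, 0 < hHerm.eigenvalues j ∧ z = ((σ * hHerm.eigenvalues j : ℝ) : ℂ) := by
    intro z hz
    have hz0 : z ≠ 0 := by
      rintro rfl
      rw [spectrum.zero_mem_iff] at hz
      exact hz hMCu
    obtain ⟨v, hv0, hveq⟩ : ∃ v, v ≠ 0 ∧ ((Gh * F * H).map (algebraMap ℝ ℂ)) *ᵥ v = z • v := by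
      rw [spectrum.mem_iff] at hz
      rw [Matrix.isUnit_iff_isUnit_det, isUnit_iff_ne_zero, Ne, not_not] at hz
      obtain ⟨v, hv, h0⟩ := (Matrix.exists_mulVec_eq_zero_iff).mpr hz
      refine ⟨v, hv, ?_⟩
      rw [Matrix.sub_mulVec, Algebra.algebraMap_eq_smul_one, Matrix.smul_mulVec,
        Matrix.one_mulVec, sub_eq_zero] at h0
      exact h0.symm
    set x := ((F * H).map (algebraMap ℝ ℂ)) *ᵥ v with hx
    have hsplit : (Gh * F * H).map (algebraMap ℝ ℂ)
        = Gh.map (algebraMap ℝ ℂ) * (F * H).map (algebraMap ℝ ℂ) := by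
      rw [← Matrix.map_mul, Matrix.mul_assoc]
    have hx0 : x ≠ 0 := by
      intro h0
      apply hz0
      have hzv : z • v = 0 := by
        rw [← hveq, hsplit, ← Matrix.mulVec_mulVec, ← hx, h0, Matrix.mulVec_zero]
      rcases smul_eq_zero.mp hzv with h | h
      · exact h
      · exact absurd h hv0
    have hxeq : ((σ • (Gᵀ * G)).map (algebraMap ℝ ℂ)) *ᵥ x = z • x := by
      have h1 : F * H * Gh = σ • (Gᵀ * G) := by
        rw [hF, hfac]
        simp only [Matrix.smul_mul, Matrix.mul_assoc]
      rw [← h1, hx, Matrix.mulVec_mulVec, ← Matrix.map_mul]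
      have hassoc : F * H * Gh * (F * H) = F * H * (Gh * F * H) := by
        simp only [Matrix.mul_assoc]
      rw [hassoc, Matrix.map_mul, ← Matrix.mulVec_mulVec, hveq, Matrix.mulVec_smul]
    set g := ∑ i, Complex.normSq (((G.map (algebraMap ℝ ℂ)) *ᵥ x) i) with hgdef
    set n := ∑ i, Complex.normSq (x i) with hndef
    have hsm : (σ • (Gᵀ * G)).map (algebraMap ℝ ℂ)
        = (σ : ℂ) • (Gᵀ * G).map (algebraMap ℝ ℂ) := by
      ext i j
      simp only [Matrix.map_apply, Matrix.smul_apply, smul_eq_mul,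
        Complex.coe_algebraMap]
      push_cast
      ring
    have hdot : (σ : ℂ) * g = z * n := by
      have hw1 : star x ⬝ᵥ (((σ • (Gᵀ * G)).map (algebraMap ℝ ℂ)) *ᵥ x) = z * n := by
        rw [hxeq, dotProduct_smul, smul_eq_mul, star_dot]
      have hw2 : star x ⬝ᵥ (((σ • (Gᵀ * G)).map (algebraMap ℝ ℂ)) *ᵥ x) = (σ : ℂ) * g := by
        rw [hsm, Matrix.smul_mulVec, dotProduct_smul, smul_eq_mul]
        congr 1
        have hA := dot_self_form Gᵀ x
        rw [Matrix.transpose_transpose] at hA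
        rw [hA]
      rw [← hw1, hw2]
    have hn0 : 0 < n := by
      have hxne : ∃ i, x i ≠ 0 := by
        by_contra hall
        push_neg at hall
        exact hx0 (funext hall)
      obtain ⟨i, hi⟩ := hxne
      exact Finset.sum_pos' (fun i _ => Complex.normSq_nonneg _)
        ⟨i, Finset.mem_univ i, Complex.normSq_pos.mpr hi⟩
    have hgnn : 0 ≤ g := Finset.sum_nonneg fun i _ => Complex.normSq_nonneg _
    have hnne : (n : ℂ) ≠ 0 := by exact_mod_cast hn0.ne'
    have hzr : z = ((σ * g / n : ℝ) : ℂ) := by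
      push_cast
      field_simp
      linear_combination -hdot
    have hg0 : 0 < g := by
      rcases hgnn.lt_or_eq with h | h
      · exact h
      · exfalso
        apply hz0
        rw [hzr, ← h]
        simp
    have hzrpos : 0 < σ * g / n := div_pos (mul_pos hσ0 hg0) hn0
    -- extract a real eigenvector
    have hcomp : ∀ i, (∑ j, ((σ • (Gᵀ * G)) i j : ℂ) * x j) = ((σ * g / n : ℝ) : ℂ) * x i := by
      intro i
      have hco := congrFun hxeq i
      rw [hzr] at hco
      simpa [Matrix.mulVec, dotProduct, Matrix.map_apply, Pi.smul_apply,
        smul_eq_mul] using hco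
    have hre : (σ • (Gᵀ * G)) *ᵥ (fun i => (x i).re)
        = (σ * g / n) • (fun i => (x i).re) := by
      ext i
      have hco := congrArg Complex.re (hcomp i)
      simpa [Complex.re_sum, Complex.re_ofReal_mul, Pi.smul_apply, smul_eq_mul,
        Matrix.mulVec, dotProduct] using hco
    have him : (σ • (Gᵀ * G)) *ᵥ (fun i => (x i).im)
        = (σ * g / n) • (fun i => (x i).im) := by
      ext i
      have hco := congrArg Complex.im (hcomp i)
      simpa [Complex.im_sum, Complex.im_ofReal_mul, Pi.smul_apply, smul_eq_mul,
        Matrix.mulVec, dotProduct] using hco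
    have hy : ∃ y : Fin q → ℝ, y ≠ 0 ∧ (σ • (Gᵀ * G)) *ᵥ y = (σ * g / n) • y := by
      by_cases hre0 : (fun i => (x i).re) = (0 : Fin q → ℝ)
      · refine ⟨_, ?_, him⟩
        intro h0
        apply hx0
        funext i
        exact Complex.ext (congrFun hre0 i) (congrFun h0 i)
      · exact ⟨_, hre0, hre⟩
    obtain ⟨y, hy0, hyeq⟩ := hy
    have hS : (Gᵀ * G) *ᵥ y = (σ * g / n / σ) • y := by
      apply smul_right_injective (Fin q → ℝ) (ne_of_gt hσ0)
      show σ • ((Gᵀ * G) *ᵥ y) = σ • ((σ * g / n / σ) • y)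
      rw [← Matrix.smul_mulVec, hyeq, smul_smul]
      congr 1
      field_simp
    obtain ⟨j, hj⟩ := eig_mem hHerm hy0 hS
    refine ⟨j, ?_, ?_⟩
    · rw [← hj]
      exact div_pos hzrpos hσ0
    · rw [hzr, ← hj]
      congr 1
      field_simp
  refine ⟨?_, ?_, part3, ?_⟩
  · intro z hz
    obtain ⟨j, hj, rfl⟩ := key z hz
    refine ⟨by simp, ?_⟩
    simp only [Complex.ofReal_re]
    exact mul_pos hσ0 hj
  · -- spectral radius
    have hmap1 : (1 - Gh * F * H).map (algebraMap ℝ ℂ)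
        = 1 - (Gh * F * H).map (algebraMap ℝ ℂ) := by
      have h := map_sub ((algebraMap ℝ ℂ).mapMatrix (m := Fin m)) 1 (Gh * F * H)
      simpa using h
    have hspec : ∀ z ∈ spectrum ℂ ((1 - Gh * F * H).map (algebraMap ℝ ℂ)),
        (1 - z) ∈ spectrum ℂ ((Gh * F * H).map (algebraMap ℝ ℂ)) := by
      intro z hz
      rw [hmap1, spectrum.mem_iff] at hz
      rw [spectrum.mem_iff]
      intro hu
      apply hz
      have heq : algebraMap ℂ (Matrix (Fin m) (Fin m) ℂ) z
            - (1 - (Gh * F * H).map (algebraMap ℝ ℂ))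
          = -(algebraMap ℂ (Matrix (Fin m) (Fin m) ℂ) (1 - z)
            - (Gh * F * H).map (algebraMap ℝ ℂ)) := by
        simp only [Algebra.algebraMap_eq_smul_one, sub_smul, one_smul]
        abel
      rw [heq]
      exact hu.neg
    set T' : Finset (Fin q) := Finset.univ.filter (fun j => 0 < hHerm.eigenvalues j) with hT'
    set r : NNReal := T'.sup (fun j => ‖1 - σ * hHerm.eigenvalues j‖₊) with hrdef
    have hrlt : r < 1 := by
      rw [hrdef]
      refine Finset.sup_lt_iff (by norm_num : (⊥ : NNReal) < 1) |>.mpr ?_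
      intro j hj
      rw [hT', Finset.mem_filter] at hj
      exact habs j hj.2
    have hle : specRad (1 - Gh * F * H) ≤ (r : ENNReal) := by
      rw [specRad, spectralRadius]
      apply iSup₂_le
      intro z hz
      obtain ⟨j, hj, hzz⟩ := key _ (hspec z hz)
      have hz_eq : z = ((1 - σ * hHerm.eigenvalues j : ℝ) : ℂ) := by
        push_cast at hzz ⊢
        linear_combination -hzz
      rw [hz_eq, Complex.nnnorm_real]
      have hsup : ‖(1 - σ * hHerm.eigenvalues j : ℝ)‖₊ ≤ r := by
        have hmem : j ∈ T' := by
          rw [hT', Finset.mem_filter]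
          exact ⟨Finset.mem_univ j, hj⟩
        rw [hrdef]
        exact Finset.le_sup (f := fun j => ‖1 - σ * hHerm.eigenvalues j‖₊) hmem
      exact_mod_cast hsup
    calc specRad (1 - Gh * F * H) ≤ (r : ENNReal) := hle
      _ < 1 := by exact_mod_cast hrlt
  · intro Uinf hfix k
    have hFG : (1 : Matrix (Fin q) (Fin q) ℝ) - F * G = 1 - σ • (Gᵀ * G) := by
      rw [hF, Matrix.smul_mul]
    have hdiff : U (k + 1) - Uinf = (1 - σ • (Gᵀ * G)) *ᵥ (U k - Uinf) := by
      rw [Matrix.mulVec_sub, ← hFG, hU k]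
      nth_rewrite 1 [hfix]
      abel
    rw [hdiff]
    exact part3 _
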